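/- arXiv:2208.12668 — 6 statements merged into one kernel-verified Lean document; each statement's English description precedes it below -/
import Mathlib

section
/- Let L be a real Lie algebra, J : L → L linear with J² = -id, N its Nijenhuis torsion, and L_N J the operator X ↦ [N,JX] - J[N,X]. Then for all N, X, Y ∈ L: [N(X,Y), N] = (L_N J)([JX,Y]) + (L_N J)([X,JY]) - (L_{(L_N J)(X)} J)(Y) + (L_{(L_N J)(Y)} J)(X) + N([X,N],Y) + N(X,[Y,N]). -/
/-- The bracket of a value of the Nijenhuis torsion with an arbitrary element `Z`:
`[N(X,Y), Z] = (L_Z J)([JX,Y]) + (L_Z J)([X,JY]) - (L_{(L_Z J)X} J)(Y)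
  + (L_{(L_Z J)Y} J)(X) + N([X,Z],Y) + N(X,[Y,Z])`,
where `(L_V J)(X) = [V,JX] - J[V,X]`. -/
theorem bracket_nijenhuis_formula (L : Type*) [LieRing L] [LieAlgebra ℝ L]
    (J : L →ₗ[ℝ] L) (hJ : ∀ X, J (J X) = -X)
    (N : L → L → L)
    (hN : ∀ X Y, N X Y = ⁅J X, J Y⁆ - J ⁅J X, Y⁆ - J ⁅X, J Y⁆ - ⁅X, Y⁆)
    (LJ : L → L → L)
    (hLJ : ∀ V X, LJ V X = ⁅V, J X⁆ - J ⁅V, X⁆) :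
    ∀ Z X Y : L,
      ⁅N X Y, Z⁆ =
        LJ Z ⁅J X, Y⁆ + LJ Z ⁅X, J Y⁆ - LJ (LJ Z X) Y + LJ (LJ Z Y) X +
          N ⁅X, Z⁆ Y + N X ⁅Y, Z⁆ := by
  have flip : ∀ a b : L, ⁅a, b⁆ = -⁅b, a⁆ := fun a b => by rw [← lie_skew]
  intro Z X Y
  simp only [hN, hLJ, map_sub, map_add, map_neg, lie_sub, sub_lie, lie_add, add_lie,
    lie_neg, neg_lie, hJ, neg_neg, lie_lie]
  simp only [flip Z]
  simp only [map_sub, map_add, map_neg, lie_sub, sub_lie, lie_add, add_lie,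
    lie_neg, neg_lie, neg_neg, lie_lie]
  simp only [flip (J ⁅Y, Z⁆), map_neg, lie_neg, neg_lie, neg_neg]
  abel
end

section
/- Let L be a real Lie algebra, J : L → L linear with J² = -id, N its Nijenhuis torsion, and let D ⊆ L be the ℝ-linear span of all values N(X,Y). If for every Z ∈ D and every X ∈ L one has [Z,JX] - J[Z,X] ∈ D, then D is a Lie subalgebra of L (i.e. closed under the bracket). -/
/-- If the span `D` of the image of the Nijenhuis torsion of `J` satisfies
`[Z,JX] - J[Z,X] ∈ D` for all `Z ∈ D`, `X ∈ L`, then `D` is closed under the bracket. -/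
theorem imageNijenhuis_subalgebra (L : Type*) [LieRing L] [LieAlgebra ℝ L]
    (J : L →ₗ[ℝ] L) (hJ : ∀ X, J (J X) = -X)
    (N : L → L → L)
    (hN : ∀ X Y, N X Y = ⁅J X, J Y⁆ - J ⁅J X, Y⁆ - J ⁅X, J Y⁆ - ⁅X, Y⁆)
    (D : Submodule ℝ L)
    (hD : D = Submodule.span ℝ {z : L | ∃ X Y : L, z = N X Y})
    (hLJ : ∀ Z ∈ D, ∀ X : L, ⁅Z, J X⁆ - J ⁅Z, X⁆ ∈ D) :
    ∀ a ∈ D, ∀ b ∈ D, ⁅a, b⁆ ∈ D := by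
  intro a ha b hb
  -- the set of generators
  have hgen : ∀ X Y : L, N X Y ∈ D := by
    intro X Y
    rw [hD]
    exact Submodule.subset_span ⟨X, Y, rfl⟩
  -- key: bracket of an element of D with a generator is in D
  have key : ∀ X Y : L, ⁅a, N X Y⁆ ∈ D := by
    intro X Y
    set f : L → L := fun W => ⁅a, J W⁆ - J ⁅a, W⁆ with hf_def
    have hf : ∀ W, f W ∈ D := fun W => hLJ a ha W
    have t1 : ⁅f X, J Y⁆ - J ⁅f X, Y⁆ ∈ D := hLJ (f X) (hf X) Y
    have t2 : ⁅J X, f Y⁆ - J ⁅X, f Y⁆ ∈ D := by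
      have h := hLJ (f Y) (hf Y) X
      have : ⁅J X, f Y⁆ - J ⁅X, f Y⁆ = -(⁅f Y, J X⁆ - J ⁅f Y, X⁆) := by
        rw [← lie_skew (f Y) (J X), ← lie_skew (f Y) X, map_neg]
        abel
      rw [this]
      exact neg_mem h
    have hid : ⁅a, N X Y⁆ =
        N ⁅a, X⁆ Y + N X ⁅a, Y⁆ + (⁅f X, J Y⁆ - J ⁅f X, Y⁆)
          + (⁅J X, f Y⁆ - J ⁅X, f Y⁆) - f ⁅J X, Y⁆ - f ⁅X, J Y⁆ := by
      simp only [hN, hf_def]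
      simp only [map_sub, map_add, lie_sub, sub_lie, lie_add, add_lie, lie_lie]
      abel
    rw [hid]
    exact sub_mem (sub_mem (add_mem (add_mem (add_mem (hgen _ _) (hgen _ _)) t1) t2)
      (hf _)) (hf _)
  -- span induction on b
  rw [hD] at hb
  induction hb using Submodule.span_induction with
  | mem z hz =>
    obtain ⟨X, Y, rfl⟩ := hz
    exact key X Y
  | zero => simp
  | add x y _ _ hx hy => rw [lie_add]; exact add_mem hx hy
  | smul c x _ hx => rw [lie_smul]; exact Submodule.smul_mem _ _ hx
end

section
/- Let L be a real Lie algebra, J : L → L linear with J² = -id, N its Nijenhuis torsion, D = span of Im N, and Lℂ the complexification with T⁺ = {X - iJX : X ∈ L}. Then the ℂ-subspace T⁺ + Dℂ of Lℂ is closed under the Lie bracket if and only if D is a Lie subalgebra satisfying [Z,JX] - J[Z,X] ∈ D for all Z ∈ D and X ∈ L. -/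
open TensorProduct

/-- Inclusion of a real vector space into its complexification. -/
noncomputable def incl {L : Type*} [AddCommGroup L] [Module ℝ L] (x : L) : ℂ ⊗[ℝ] L :=
  (1 : ℂ) ⊗ₜ[ℝ] x

/-- `A⁺(X) = ½(X - iJX)` in the complexification. -/
noncomputable def Ap {L : Type*} [AddCommGroup L] [Module ℝ L] (J : L →ₗ[ℝ] L) (x : L) :
    ℂ ⊗[ℝ] L :=
  (1 / 2 : ℂ) • (incl x - Complex.I • incl (J x))

/-- `A⁻(X) = ½(X + iJX)` in the complexification. -/
noncomputable def Am {L : Type*} [AddCommGroup L] [Module ℝ L] (J : L →ₗ[ℝ] L) (x : L) :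
    ℂ ⊗[ℝ] L :=
  (1 / 2 : ℂ) • (incl x + Complex.I • incl (J x))

section Aux
variable {L : Type*} [AddCommGroup L] [Module ℝ L]

/-- Real part projection of the complexification. -/
noncomputable def reL : ℂ ⊗[ℝ] L →ₗ[ℝ] L :=
  TensorProduct.lift ((LinearMap.lsmul ℝ L).comp Complex.reLm)

/-- Imaginary part projection of the complexification. -/
noncomputable def imL : ℂ ⊗[ℝ] L →ₗ[ℝ] L :=
  TensorProduct.lift ((LinearMap.lsmul ℝ L).comp Complex.imLm)

@[simp] lemma reL_tmul (c : ℂ) (x : L) : reL (c ⊗ₜ[ℝ] x) = c.re • x := rfl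
@[simp] lemma imL_tmul (c : ℂ) (x : L) : imL (c ⊗ₜ[ℝ] x) = c.im • x := rfl

lemma smul_incl (c : ℂ) (x : L) : c • incl x = c ⊗ₜ[ℝ] x := by
  rw [incl, smul_tmul', smul_eq_mul, mul_one]

@[simp] lemma incl_add (x y : L) : incl (x + y) = incl x + incl y := TensorProduct.tmul_add _ _ _

@[simp] lemma reL_incl (x : L) : reL (incl x) = x := by simp [incl]
@[simp] lemma imL_incl (x : L) : imL (incl x) = 0 := by simp [incl]

@[simp] lemma reL_I_smul (z : ℂ ⊗[ℝ] L) : reL (Complex.I • z) = - imL z := by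
  induction z using TensorProduct.induction_on with
  | zero => simp
  | tmul c x => rw [smul_tmul']; simp [smul_eq_mul]
  | add a b ha hb => rw [smul_add, map_add, map_add, ha, hb, neg_add]

@[simp] lemma imL_I_smul (z : ℂ ⊗[ℝ] L) : imL (Complex.I • z) = reL z := by
  induction z using TensorProduct.induction_on with
  | zero => simp
  | tmul c x => rw [smul_tmul']; simp [smul_eq_mul]
  | add a b ha hb => rw [smul_add, map_add, map_add, ha, hb]

lemma split_reL_imL (z : ℂ ⊗[ℝ] L) : z = incl (reL z) + Complex.I • incl (imL z) := by
  induction z using TensorProduct.induction_on with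
  | zero => simp [incl]
  | tmul c x =>
      rw [reL_tmul, imL_tmul, smul_incl, incl, tmul_smul, tmul_smul, smul_tmul', smul_tmul']
      rw [← add_tmul]
      congr 1
      simp [Complex.ext_iff]
  | add a b ha hb =>
      rw [map_add, map_add, incl_add, incl_add, smul_add]
      conv_lhs => rw [ha, hb]
      abel

lemma coe_smul_eq (r : ℝ) (z : ℂ ⊗[ℝ] L) : (r : ℂ) • z = r • z := by
  rw [← algebraMap_smul ℂ r z, Complex.coe_algebraMap]

/-- The auxiliary criterion map `z ↦ J (re z) + im z`. -/
noncomputable def psiJ (J : L →ₗ[ℝ] L) : ℂ ⊗[ℝ] L →ₗ[ℝ] L := J ∘ₗ reL + imL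

lemma psiJ_apply (J : L →ₗ[ℝ] L) (z : ℂ ⊗[ℝ] L) :
    psiJ J z = J (reL z) + imL z := rfl

@[simp] lemma psiJ_incl (J : L →ₗ[ℝ] L) (w : L) : psiJ J (incl w) = J w := by
  rw [psiJ_apply]; simp

@[simp] lemma psiJ_I_incl (J : L →ₗ[ℝ] L) (w : L) :
    psiJ J (Complex.I • incl w) = w := by
  rw [psiJ_apply]; simp

end Aux

section LieAux
variable {L : Type*} [LieRing L] [LieAlgebra ℝ L]

lemma lie_incl (x y : L) : ⁅incl x, incl y⁆ = incl ⁅x, y⁆ := by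
  show ⁅(1:ℂ) ⊗ₜ[ℝ] x, (1:ℂ) ⊗ₜ[ℝ] y⁆ = (1:ℂ) ⊗ₜ[ℝ] ⁅x, y⁆
  rw [LieAlgebra.ExtendScalars.bracket_tmul, one_mul]

end LieAux

/-- The first derived distribution `T⁺ + Dℂ` (with `D = span Im N^J`) is closed under
the bracket iff `D` is a subalgebra satisfying `[Z,JX] - J[Z,X] ∈ D` for all `Z ∈ D`, `X ∈ L`. -/
theorem first_derived_involutive_iff (L : Type*) [LieRing L] [LieAlgebra ℝ L]
    (J : L →ₗ[ℝ] L) (hJ : ∀ X, J (J X) = -X)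
    (N : L → L → L)
    (hN : ∀ X Y, N X Y = ⁅J X, J Y⁆ - J ⁅J X, Y⁆ - J ⁅X, J Y⁆ - ⁅X, Y⁆)
    (D : Submodule ℝ L)
    (hD : D = Submodule.span ℝ {z : L | ∃ X Y : L, z = N X Y})
    (S : Submodule ℂ (ℂ ⊗[ℝ] L))
    (hS : S = Submodule.span ℂ {z : ℂ ⊗[ℝ] L | ∃ X : L, z = incl X - Complex.I • incl (J X)} ⊔
        Submodule.span ℂ (incl '' (D : Set L))) :
    (∀ a ∈ S, ∀ b ∈ S, ⁅a, b⁆ ∈ S) ↔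
      ((∀ x ∈ D, ∀ y ∈ D, ⁅x, y⁆ ∈ D) ∧
        ∀ Z ∈ D, ∀ X : L, ⁅Z, J X⁆ - J ⁅Z, X⁆ ∈ D) := by
  -- bracket manipulation helpers (elaborated with the goal's instances)
  have bsub_r : ∀ x u v : ℂ ⊗[ℝ] L, ⁅x, u - v⁆ = ⁅x, u⁆ - ⁅x, v⁆ :=
    fun x u v => lie_sub x u v
  have bsub_l : ∀ u v x : ℂ ⊗[ℝ] L, ⁅u - v, x⁆ = ⁅u, x⁆ - ⁅v, x⁆ :=
    fun u v x => sub_lie u v x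
  have badd_r : ∀ x u v : ℂ ⊗[ℝ] L, ⁅x, u + v⁆ = ⁅x, u⁆ + ⁅x, v⁆ :=
    fun x u v => lie_add x u v
  have badd_l : ∀ u v x : ℂ ⊗[ℝ] L, ⁅u + v, x⁆ = ⁅u, x⁆ + ⁅v, x⁆ :=
    fun u v x => add_lie u v x
  have bsmul_r : ∀ (c : ℂ) (x u : ℂ ⊗[ℝ] L), ⁅x, c • u⁆ = c • ⁅x, u⁆ :=
    fun c x u => lie_smul c x u
  have bsmul_l : ∀ (c : ℂ) (u x : ℂ ⊗[ℝ] L), ⁅c • u, x⁆ = c • ⁅u, x⁆ :=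
    fun c u x => smul_lie c u x
  have bzero_r : ∀ x : ℂ ⊗[ℝ] L, ⁅x, (0 : ℂ ⊗[ℝ] L)⁆ = 0 := fun x => lie_zero x
  have bzero_l : ∀ x : ℂ ⊗[ℝ] L, ⁅(0 : ℂ ⊗[ℝ] L), x⁆ = 0 := fun x => zero_lie x
  -- J of the torsion
  have hJN : ∀ X Y : L, J (N X Y) = - N (J X) Y := by
    intro X Y
    rw [hN, hN]
    simp only [map_sub, hJ, neg_lie, map_neg, LinearMap.map_neg]
    abel
  -- D is J-invariant
  have hJD : ∀ z ∈ D, J z ∈ D := by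
    intro z hz
    rw [hD] at hz ⊢
    induction hz using Submodule.span_induction with
    | mem w hw =>
        obtain ⟨X, Y, rfl⟩ := hw
        rw [hJN]
        exact neg_mem (Submodule.subset_span ⟨J X, Y, rfl⟩)
    | zero => simp
    | add a b _ _ h1 h2 => rw [map_add]; exact add_mem h1 h2
    | smul r a _ h => rw [map_smul]; exact Submodule.smul_mem _ _ h
  have hψI : ∀ z, psiJ J z ∈ D → psiJ J (Complex.I • z) ∈ D := by
    intro z hz
    have h1 : psiJ J (Complex.I • z) = - J (psiJ J z) := by
      rw [psiJ_apply, psiJ_apply, reL_I_smul, imL_I_smul, map_add, map_neg, hJ]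
      abel
    rw [h1]
    exact neg_mem (hJD _ hz)
  -- the submodule of elements satisfying the criterion
  let S' : Submodule ℂ (ℂ ⊗[ℝ] L) :=
    { carrier := {z | psiJ J z ∈ D}
      add_mem' := by
        intro a b ha hb
        show psiJ J (a + b) ∈ D
        rw [map_add]; exact add_mem ha hb
      zero_mem' := by show psiJ J 0 ∈ D; rw [map_zero]; exact zero_mem D
      smul_mem' := by
        intro c z hz
        show psiJ J (c • z) ∈ D
        have h1 : c • z = (c.re : ℂ) • z + (c.im : ℂ) • (Complex.I • z) := by
          rw [smul_smul, ← add_smul]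
          norm_num [Complex.re_add_im]
        rw [h1, coe_smul_eq, coe_smul_eq, map_add, map_smul, map_smul]
        exact add_mem (Submodule.smul_mem _ _ hz) (Submodule.smul_mem _ _ (hψI z hz))
      }
  have hS'mem : ∀ z : ℂ ⊗[ℝ] L, z ∈ S' ↔ psiJ J z ∈ D := fun z => Iff.rfl
  -- the membership criterion
  have hmemS : ∀ z : ℂ ⊗[ℝ] L, z ∈ S ↔ psiJ J z ∈ D := by
    intro z
    constructor
    · intro hz
      have hle : S ≤ S' := by
        rw [hS]
        apply sup_le
        · rw [Submodule.span_le]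
          rintro _ ⟨X, rfl⟩
          show psiJ J _ ∈ D
          rw [map_sub, psiJ_incl, psiJ_I_incl]
          simp
        · rw [Submodule.span_le]
          rintro _ ⟨d, hd, rfl⟩
          show psiJ J (incl d) ∈ D
          rw [psiJ_incl]
          exact hJD d hd
      exact hle hz
    · intro hz
      have hsplit : z = (incl (reL z) - Complex.I • incl (J (reL z)))
          + Complex.I • incl (psiJ J z) := by
        conv_lhs => rw [split_reL_imL z]
        rw [psiJ_apply, incl_add, smul_add]
        abel
      rw [hsplit, hS]
      refine add_mem ?_ ?_
      · exact Submodule.mem_sup_left (Submodule.subset_span ⟨reL z, rfl⟩)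
      · exact Submodule.mem_sup_right
          (Submodule.smul_mem _ _ (Submodule.subset_span ⟨psiJ J z, hz, rfl⟩))
  -- key computations of ψ on brackets of generators
  have key1 : ∀ X Y : L,
      psiJ J ⁅incl X - Complex.I • incl (J X), incl Y - Complex.I • incl (J Y)⁆
        = N (J X) Y := by
    intro X Y
    rw [hN]
    simp only [bsub_r, bsub_l, bsmul_r, bsmul_l, lie_incl, smul_smul, Complex.I_mul_I,
      neg_smul, one_smul, map_sub, map_neg, psiJ_incl, psiJ_I_incl, hJ, neg_lie,
      LinearMap.map_neg]
    abel
  have key2 : ∀ (Z X : L),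
      psiJ J ⁅incl Z, incl X - Complex.I • incl (J X)⁆ = J ⁅Z, X⁆ - ⁅Z, J X⁆ := by
    intro Z X
    simp only [bsub_r, bsmul_r, lie_incl, map_sub, psiJ_incl, psiJ_I_incl]
  have key3 : ∀ (X Z : L),
      psiJ J ⁅incl X - Complex.I • incl (J X), incl Z⁆ = J ⁅X, Z⁆ - ⁅J X, Z⁆ := by
    intro X Z
    simp only [bsub_l, bsmul_l, lie_incl, map_sub, psiJ_incl, psiJ_I_incl]
  constructor
  · intro h
    have hgenP : ∀ X : L, incl X - Complex.I • incl (J X) ∈ S := by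
      intro X
      rw [hS]
      exact Submodule.mem_sup_left (Submodule.subset_span ⟨X, rfl⟩)
    have hgenD : ∀ d ∈ D, incl d ∈ S := by
      intro d hd
      rw [hS]
      exact Submodule.mem_sup_right (Submodule.subset_span ⟨d, hd, rfl⟩)
    constructor
    · intro x hx y hy
      have hb := h _ (hgenD x hx) _ (hgenD y hy)
      rw [hmemS, lie_incl, psiJ_incl] at hb
      have h2 := hJD _ hb
      rw [hJ] at h2
      simpa using neg_mem h2
    · intro Z hZ X
      have hb := h _ (hgenD Z hZ) _ (hgenP X)
      rw [hmemS, key2] at hb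
      simpa using neg_mem hb
  · rintro ⟨h1, h2⟩ a ha b hb
    rw [hS, ← Submodule.span_union] at ha hb
    rw [hmemS]
    show ⁅a, b⁆ ∈ S'
    induction ha using Submodule.span_induction with
    | zero => rw [bzero_l]; exact zero_mem S'
    | add u v _ _ hu hv => rw [badd_l]; exact add_mem hu hv
    | smul c u _ hu => rw [bsmul_l]; exact Submodule.smul_mem S' c hu
    | mem a hga =>
        induction hb using Submodule.span_induction with
        | zero => rw [bzero_r]; exact zero_mem S'
        | add u v _ _ hu hv => rw [badd_r]; exact add_mem hu hv
        | smul c u _ hu => rw [bsmul_r]; exact Submodule.smul_mem S' c hu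
        | mem b hgb =>
            rcases hga with ⟨X, rfl⟩ | ⟨d, hd, rfl⟩
            · rcases hgb with ⟨Y, rfl⟩ | ⟨e, he, rfl⟩
              · show psiJ J _ ∈ D
                rw [key1, hD]
                exact Submodule.subset_span ⟨J X, Y, rfl⟩
              · show psiJ J _ ∈ D
                rw [key3]
                have hc := h2 e he X
                have heq : J ⁅X, e⁆ - ⁅J X, e⁆ = ⁅e, J X⁆ - J ⁅e, X⁆ := by
                  rw [← lie_skew X e, ← lie_skew (J X) e, LinearMap.map_neg]
                  abel
                rw [heq]
                exact hc
            · rcases hgb with ⟨Y, rfl⟩ | ⟨e, he, rfl⟩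
              · show psiJ J _ ∈ D
                rw [key2]
                have hc := h2 d hd Y
                simpa using neg_mem hc
              · show psiJ J _ ∈ D
                rw [lie_incl, psiJ_incl]
                exact hJD _ (h1 d hd e he)
end

section
/- Let g be a real Lie algebra and J : g → g linear with J² = -id and Nijenhuis torsion N^J. Suppose Im N^J (the span of all N^J(A,B)) is an ideal of g. Then [N, JX] - J[N, X] ∈ Im N^J for all N ∈ Im N^J and X ∈ g. -/
/-- If the span of the image of the Nijenhuis torsion `N^J` is an ideal of `g`, then
`[N, JX] - J[N, X] ∈ Im N^J` for all `N ∈ Im N^J` and `X ∈ g`. -/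
theorem ideal_implies_minimal (g : Type*) [LieRing g] [LieAlgebra ℝ g]
    (J : g →ₗ[ℝ] g) (hJ : ∀ X, J (J X) = -X)
    (N : g → g → g)
    (hN : ∀ A B, N A B = ⁅J A, J B⁆ - J ⁅J A, B⁆ - J ⁅A, J B⁆ - ⁅A, B⁆)
    (D : Submodule ℝ g)
    (hD : D = Submodule.span ℝ {z : g | ∃ A B : g, z = N A B})
    (hIdeal : ∀ x ∈ D, ∀ Y : g, ⁅Y, x⁆ ∈ D) :
    ∀ Z ∈ D, ∀ X : g, ⁅Z, J X⁆ - J ⁅Z, X⁆ ∈ D := by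
  have hJN : ∀ A B, J (N A B) = - N (J A) B := by
    intro A B
    simp only [hN, map_sub, hJ, neg_lie, lie_neg, map_neg]
    abel
  have hJD : ∀ x ∈ D, J x ∈ D := by
    intro x hx
    rw [hD] at hx ⊢
    induction hx using Submodule.span_induction with
    | mem z hz =>
      obtain ⟨A, B, rfl⟩ := hz
      rw [hJN]
      exact neg_mem (Submodule.subset_span ⟨J A, B, rfl⟩)
    | zero => simp
    | add a b _ _ ha hb => rw [map_add]; exact add_mem ha hb
    | smul c a _ ha => rw [map_smul]; exact Submodule.smul_mem _ _ ha
  intro Z hZ X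
  have h1 : ⁅Z, X⁆ ∈ D := by
    have := hIdeal Z hZ X
    rw [← neg_mem_iff, ← lie_skew]
    simpa using this
  have h2 : ⁅J Z, J X⁆ ∈ D := by
    have := hIdeal (J Z) (hJD Z hZ) (J X)
    rw [← neg_mem_iff, ← lie_skew]
    simpa using this
  have h3 : J ⁅J Z, X⁆ ∈ D := by
    refine hJD _ ?_
    have := hIdeal (J Z) (hJD Z hZ) X
    rw [← neg_mem_iff, ← lie_skew]
    simpa using this
  have hNZX : N Z X ∈ D := by
    rw [hD]; exact Submodule.subset_span ⟨Z, X, rfl⟩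
  have h4 : J ⁅Z, J X⁆ ∈ D := by
    have heq : J ⁅Z, J X⁆ = ⁅J Z, J X⁆ - J ⁅J Z, X⁆ - ⁅Z, X⁆ - N Z X := by
      rw [hN]; abel
    rw [heq]
    exact sub_mem (sub_mem (sub_mem h2 h3) h1) hNZX
  have h5 : ⁅Z, J X⁆ ∈ D := by
    have := hJD _ h4
    rw [hJ] at this
    exact neg_mem_iff.mp this
  exact sub_mem h5 (hJD _ h1)
end

section
/- Let L be a real Lie algebra, J linear with J² = -id, and define inductively D⁽¹⁾ = span Im N^J and D⁽ᵏ⁺¹⁾ = D⁽ᵏ⁾ + span{(L_U J)(X) : U ∈ D⁽ᵏ⁾, X ∈ L} + [D⁽ᵏ⁾, D⁽ᵏ⁾]. Then each D⁽ᵏ⁾ is J-stable: J(D⁽ᵏ⁾) ⊆ D⁽ᵏ⁾. -/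
/-- Each term of the `J`-derived flag `D⁽¹⁾ = span Im N^J`,
`D⁽ᵏ⁺¹⁾ = D⁽ᵏ⁾ + span{(L_U J)X : U ∈ D⁽ᵏ⁾, X ∈ L} + [D⁽ᵏ⁾, D⁽ᵏ⁾]` is `J`-stable. -/
theorem derived_flag_J_stable (L : Type*) [LieRing L] [LieAlgebra ℝ L]
    (J : L →ₗ[ℝ] L) (hJ : ∀ X, J (J X) = -X)
    (N : L → L → L)
    (hN : ∀ X Y, N X Y = ⁅J X, J Y⁆ - J ⁅J X, Y⁆ - J ⁅X, J Y⁆ - ⁅X, Y⁆)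
    (D : ℕ → Submodule ℝ L)
    (hD1 : D 1 = Submodule.span ℝ {z : L | ∃ X Y : L, z = N X Y})
    (hDsucc : ∀ k, 1 ≤ k → D (k + 1) =
      D k ⊔ Submodule.span ℝ {z : L | ∃ U ∈ D k, ∃ X : L, z = ⁅U, J X⁆ - J ⁅U, X⁆} ⊔
        Submodule.span ℝ {z : L | ∃ x ∈ D k, ∃ y ∈ D k, z = ⁅x, y⁆}) :
    ∀ k, 1 ≤ k → ∀ x ∈ D k, J x ∈ D k := by
  intro k hk
  induction k, hk using Nat.le_induction with
  | base =>
    intro x hx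
    rw [hD1] at hx ⊢
    refine Submodule.span_induction ?_ (by simp) ?_ ?_ hx
    · rintro z ⟨X, Y, rfl⟩
      have h : J (N X Y) = -(N (J X) Y) := by
        simp only [hN, map_sub, map_neg, hJ, neg_lie, lie_neg]
        abel
      rw [h]
      exact neg_mem (Submodule.subset_span ⟨J X, Y, rfl⟩)
    · intro a b _ _ ha hb; rw [map_add]; exact add_mem ha hb
    · intro c a _ ha; rw [map_smul]; exact Submodule.smul_mem _ _ ha
  | succ k hk ih =>
    have hDk : D k ≤ D (k + 1) := by
      rw [hDsucc k hk]; exact le_sup_of_le_left le_sup_left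
    have hAle : Submodule.span ℝ {z : L | ∃ U ∈ D k, ∃ X : L, z = ⁅U, J X⁆ - J ⁅U, X⁆}
        ≤ D (k + 1) := by
      rw [hDsucc k hk]; exact le_sup_of_le_left le_sup_right
    have hBle : Submodule.span ℝ {z : L | ∃ x ∈ D k, ∃ y ∈ D k, z = ⁅x, y⁆}
        ≤ D (k + 1) := by
      rw [hDsucc k hk]; exact le_sup_right
    have key : D (k + 1) ≤ (D (k + 1)).comap J := by
      conv_lhs => rw [hDsucc k hk]
      refine sup_le (sup_le ?_ ?_) ?_
      · exact fun u hu => hDk (ih u hu)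
      · rw [Submodule.span_le]
        rintro z ⟨U, hU, X, rfl⟩
        have h : J (⁅U, J X⁆ - J ⁅U, X⁆) = -(⁅U, J (J X)⁆ - J ⁅U, J X⁆) := by
          simp only [map_sub, hJ, lie_neg]
          abel
        show J _ ∈ D (k + 1)
        rw [h]
        exact neg_mem (hAle (Submodule.subset_span ⟨U, hU, J X, rfl⟩))
      · rw [Submodule.span_le]
        rintro z ⟨a, ha, b, hb, rfl⟩
        show J ⁅a, b⁆ ∈ D (k + 1)
        have h : J ⁅a, b⁆ = ⁅a, J b⁆ - (⁅a, J b⁆ - J ⁅a, b⁆) := by abel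
        rw [h]
        exact sub_mem (hBle (Submodule.subset_span ⟨a, ha, J b, ih b hb, rfl⟩))
          (hAle (Submodule.subset_span ⟨a, ha, b, rfl⟩))
    exact fun x hx => key hx
end

section
/- Let L be a real Lie algebra, J linear with J² = -id, and D^∞ = ⋃ₖ D⁽ᵏ⁾ the union of the J-derived flag (D⁽¹⁾ = span Im N^J, D⁽ᵏ⁺¹⁾ = D⁽ᵏ⁾ + span{(L_U J)(X) : U ∈ D⁽ᵏ⁾, X ∈ L} + [D⁽ᵏ⁾,D⁽ᵏ⁾]). Then D^∞ is a Lie subalgebra of L, is J-stable, and satisfies (L_U J)(X) ∈ D^∞ for all U ∈ D^∞ and X ∈ L. -/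
/-- The union `D^∞ = ⋃ₖ D⁽ᵏ⁾` of the `J`-derived flag is a Lie subalgebra, is `J`-stable,
and satisfies `(L_U J)(X) ∈ D^∞` for all `U ∈ D^∞`, `X ∈ L`. -/
theorem derived_flag_union_properties (L : Type*) [LieRing L] [LieAlgebra ℝ L]
    (J : L →ₗ[ℝ] L) (hJ : ∀ X, J (J X) = -X)
    (N : L → L → L)
    (hN : ∀ X Y, N X Y = ⁅J X, J Y⁆ - J ⁅J X, Y⁆ - J ⁅X, J Y⁆ - ⁅X, Y⁆)
    (D : ℕ → Submodule ℝ L)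
    (hD1 : D 1 = Submodule.span ℝ {z : L | ∃ X Y : L, z = N X Y})
    (hDsucc : ∀ k, 1 ≤ k → D (k + 1) =
      D k ⊔ Submodule.span ℝ {z : L | ∃ U ∈ D k, ∃ X : L, z = ⁅U, J X⁆ - J ⁅U, X⁆} ⊔
        Submodule.span ℝ {z : L | ∃ x ∈ D k, ∃ y ∈ D k, z = ⁅x, y⁆}) :
    (∀ a ∈ (⨆ k, D (k + 1)), ∀ b ∈ (⨆ k, D (k + 1)), ⁅a, b⁆ ∈ (⨆ k, D (k + 1))) ∧
    (∀ x ∈ (⨆ k, D (k + 1)), J x ∈ (⨆ k, D (k + 1))) ∧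
    (∀ U ∈ (⨆ k, D (k + 1)), ∀ X : L, ⁅U, J X⁆ - J ⁅U, X⁆ ∈ (⨆ k, D (k + 1))) := by
  set S := ⨆ k, D (k + 1) with hS
  -- each level sits inside the next
  have hstep : ∀ k, D (k + 1) ≤ D (k + 2) := by
    intro k
    rw [hDsucc (k + 1) (by omega)]
    exact le_sup_of_le_left le_sup_left
  have hmono : ∀ m n, m ≤ n → D (m + 1) ≤ D (n + 1) := by
    intro m n h
    induction n with
    | zero => simp [Nat.le_zero.mp h]
    | succ n ih =>
      rcases Nat.lt_or_ge m (n + 1) with h' | h'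
      · exact le_trans (ih (by omega)) (hstep n)
      · have : m = n + 1 := by omega
        simp [this]
  have hdir : Directed (· ≤ ·) (fun k => D (k + 1)) := by
    intro i j
    exact ⟨max i j, hmono i (max i j) (le_max_left _ _),
      hmono j (max i j) (le_max_right _ _)⟩
  have hmem : ∀ x : L, x ∈ S ↔ ∃ k, x ∈ D (k + 1) := by
    intro x; exact Submodule.mem_iSup_of_directed _ hdir
  have hle : ∀ k, D (k + 1) ≤ S := fun k => le_iSup (fun k => D (k + 1)) k
  -- bracket closure
  have hbr : ∀ a ∈ S, ∀ b ∈ S, ⁅a, b⁆ ∈ S := by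
    intro a ha b hb
    obtain ⟨n, hn⟩ := (hmem a).mp ha
    obtain ⟨m, hm⟩ := (hmem b).mp hb
    have hn' : a ∈ D (max n m + 1) := hmono n _ (le_max_left _ _) hn
    have hm' : b ∈ D (max n m + 1) := hmono m _ (le_max_right _ _) hm
    apply hle (max n m + 1)
    rw [hDsucc (max n m + 1) (by omega)]
    exact Submodule.mem_sup_right (Submodule.subset_span ⟨a, hn', b, hm', rfl⟩)
  -- L-derivative closure
  have hLd : ∀ U ∈ S, ∀ X : L, ⁅U, J X⁆ - J ⁅U, X⁆ ∈ S := by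
    intro U hU X
    obtain ⟨n, hn⟩ := (hmem U).mp hU
    apply hle (n + 1)
    rw [hDsucc (n + 1) (by omega)]
    exact Submodule.mem_sup_left (Submodule.mem_sup_right (Submodule.subset_span ⟨U, hn, X, rfl⟩))
  -- J-stability by induction on the level
  have hJstab : ∀ k, ∀ x ∈ D (k + 1), J x ∈ S := by
    intro k
    induction k with
    | zero =>
      intro x hx
      have : Submodule.map J (D 1) ≤ D 1 := by
        rw [hD1, Submodule.map_span, Submodule.span_le]
        rintro _ ⟨z, ⟨X, Y, rfl⟩, rfl⟩
        have key : J (N X Y) = -(N (J X) Y) := by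
          rw [hN, hN]
          simp only [map_sub, hJ, neg_lie, lie_neg, map_neg]
          abel
        rw [key]
        exact neg_mem (Submodule.subset_span ⟨J X, Y, rfl⟩)
      exact hle 0 (this ⟨x, hx, rfl⟩)
    | succ k ih =>
      intro x hx
      rw [hDsucc (k + 1) (by omega)] at hx
      have hmap : Submodule.map J (D (k + 1) ⊔
          Submodule.span ℝ {z : L | ∃ U ∈ D (k + 1), ∃ X : L, z = ⁅U, J X⁆ - J ⁅U, X⁆} ⊔
          Submodule.span ℝ {z : L | ∃ x ∈ D (k + 1), ∃ y ∈ D (k + 1), z = ⁅x, y⁆}) ≤ S := by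
        rw [Submodule.map_sup, Submodule.map_sup]
        refine sup_le (sup_le ?_ ?_) ?_
        · rintro _ ⟨y, hy, rfl⟩; exact ih y hy
        · rw [Submodule.map_span, Submodule.span_le]
          rintro _ ⟨z, ⟨U, hU, X, rfl⟩, rfl⟩
          have key : J (⁅U, J X⁆ - J ⁅U, X⁆) = -(⁅U, J (J X)⁆ - J ⁅U, J X⁆) := by
            simp only [map_sub, hJ, lie_neg]
            abel
          rw [key]
          refine neg_mem ?_
          apply hle (k + 1)
          rw [hDsucc (k + 1) (by omega)]
          exact Submodule.mem_sup_left (Submodule.mem_sup_right (Submodule.subset_span ⟨U, hU, J X, rfl⟩))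
        · rw [Submodule.map_span, Submodule.span_le]
          rintro _ ⟨z, ⟨a, ha, b, hb, rfl⟩, rfl⟩
          have h1 : ⁅a, J b⁆ ∈ S := hbr a (hle k ha) (J b) (ih b hb)
          have h2 : ⁅a, J b⁆ - J ⁅a, b⁆ ∈ S := hLd a (hle k ha) b
          have key : J ⁅a, b⁆ = ⁅a, J b⁆ - (⁅a, J b⁆ - J ⁅a, b⁆) := by abel
          rw [SetLike.mem_coe, key]
          exact sub_mem h1 h2
      exact hmap ⟨x, hx, rfl⟩
  refine ⟨hbr, ?_, hLd⟩
  intro x hx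
  obtain ⟨k, hk⟩ := (hmem x).mp hx
  exact hJstab k x hk
end
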